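/- Let F be a field and I a monomial ideal of F[x_1,...,x_n] generated in a single degree D by a set of monomials that is a lex segment (closed upward under the lexicographic order within degree D). Then for every d ≥ D, the set of degree-d monomials in I is also a lex segment: if m, m' are monomials of degree d with m ≥_lex m' and m' ∈ I, then m ∈ I. -/

import Mathlib

namespace Stmt18Aux

variable {n : ℕ}

def T (f : Fin n → ℕ) (i : ℕ) : ℕ :=
  ∑ j ∈ Finset.univ.filter (fun j : Fin n => (j : ℕ) < i), f j

lemma T_zero (f : Fin n → ℕ) : T f 0 = 0 := by simp [T]

lemma T_succ (f : Fin n → ℕ) (i : ℕ) :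
    T f (i + 1) = T f i + (if h : i < n then f ⟨i, h⟩ else 0) := by
  unfold T
  split_ifs with h
  · have he : Finset.univ.filter (fun j : Fin n => (j : ℕ) < i + 1)
        = insert ⟨i, h⟩ (Finset.univ.filter (fun j : Fin n => (j : ℕ) < i)) := by
      ext j
      simp only [Finset.mem_filter, Finset.mem_univ, true_and, Finset.mem_insert,
        Fin.ext_iff]
      omega
    rw [he, Finset.sum_insert (by simp)]
    ring
  · have he : Finset.univ.filter (fun j : Fin n => (j : ℕ) < i + 1)
        = Finset.univ.filter (fun j : Fin n => (j : ℕ) < i) := by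
      ext j
      have := j.isLt
      simp only [Finset.mem_filter, Finset.mem_univ, true_and]
      omega
    rw [he, add_zero]

lemma T_mono (f : Fin n → ℕ) : Monotone (T f) := by
  apply monotone_nat_of_le_succ
  intro i
  rw [T_succ]
  omega

lemma T_congr {f g : Fin n → ℕ} {i : ℕ} (h : ∀ j : Fin n, (j : ℕ) < i → f j = g j) :
    T f i = T g i := by
  apply Finset.sum_congr rfl
  intro j hj
  exact h j (by simpa using hj)

lemma T_top (f : Fin n → ℕ) {i : ℕ} (h : n ≤ i) : T f i = ∑ j, f j := by
  unfold T
  rw [Finset.filter_true_of_mem (fun j _ => lt_of_lt_of_le j.isLt h)]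

lemma add_le_T_top (f : Fin n → ℕ) (i : Fin n) : T f (i : ℕ) + f i ≤ ∑ j, f j := by
  have h1 : T f ((i : ℕ) + 1) = T f (i : ℕ) + f i := by
    rw [T_succ]
    simp [i.isLt]
  calc T f (i:ℕ) + f i = T f ((i:ℕ)+1) := h1.symm
    _ ≤ T f n := T_mono f i.isLt
    _ = ∑ j, f j := T_top f le_rfl

/-- greedy lex-largest degree-`D` submonomial of `f` -/
def grd (D : ℕ) (f : Fin n → ℕ) : Fin n → ℕ := fun i => min (f i) (D - T f (i : ℕ))

lemma grd_le (D : ℕ) (f : Fin n → ℕ) (i : Fin n) : grd D f i ≤ f i := min_le_left _ _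

lemma T_grd (D : ℕ) (f : Fin n → ℕ) : ∀ i : ℕ, T (grd D f) i = min (T f i) D := by
  intro i
  induction i with
  | zero => simp [T_zero]
  | succ i ih =>
    rw [T_succ, T_succ f, ih]
    split_ifs with h
    · simp only [grd, Fin.val_mk]
      omega
    · omega

lemma sum_grd (D : ℕ) (f : Fin n → ℕ) (h : D ≤ ∑ j, f j) : ∑ j, grd D f j = D := by
  have := T_grd D f n
  rw [T_top _ le_rfl, T_top _ le_rfl] at this
  omega

end Stmt18Aux

namespace Stmt18Aux

lemma T_succ_fin (f : Fin n → ℕ) (i : Fin n) : T f ((i : ℕ) + 1) = T f (i : ℕ) + f i := by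
  rw [T_succ]
  simp [i.isLt]

/-- key comparison: the greedy degree-`D` submonomial of `m` lex-dominates any
degree-`D` submonomial `a` of any `m'` with `toLex m' ≤ toLex m` and same degree. -/
lemma key (D : ℕ) (m m' a : Fin n → ℕ)
    (ha' : ∀ i, a i ≤ m' i) (hda : ∑ j, a j = D)
    (_hd : ∑ j, m' j = ∑ j, m j) (_hD : D ≤ ∑ j, m j)
    (hlex : m' = m ∨ ∃ k : Fin n, (∀ j, j < k → m' j = m j) ∧ m' k < m k) :
    ¬ ∃ i : Fin n, (∀ j, j < i → grd D m j = a j) ∧ grd D m i < a i := by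
  rintro ⟨i, hji, hlt⟩
  have hTa : T a (i : ℕ) = min (T m (i : ℕ)) D := by
    rw [← T_grd D m, T_congr (f := grd D m) (g := a)]
    intro j hj
    exact hji j hj
  have hbound : T a (i : ℕ) + a i ≤ D := hda ▸ add_le_T_top a i
  have hgrd_i : grd D m i = min (m i) (D - T m (i : ℕ)) := rfl
  -- first rule out T m i ≥ D, and derive m i < a i
  have hmi : m i < a i := by omega
  have hmi' : m i < m' i := lt_of_lt_of_le hmi (ha' i)
  rcases hlex with heq | ⟨k, hjk, hk⟩
  · rw [heq] at hmi'; omega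
  rcases lt_trichotomy i k with hik | hik | hik
  · have := hjk i hik; omega
  · subst hik; omega
  · -- k < i : partial sums of a saturate at k, so a i = 0, contradiction
    have hak : grd D m k = a k := hji k hik
    have hak' : a k ≤ m' k := ha' k
    have hgrd_k : grd D m k = min (m k) (D - T m (k : ℕ)) := rfl
    have hTak : T a (k : ℕ) = min (T m (k : ℕ)) D := by
      rw [← T_grd D m, T_congr (f := grd D m) (g := a)]
      intro j hj
      exact hji j (lt_trans hj hik)
    have hsk : T a ((k : ℕ) + 1) = T a (k : ℕ) + a k := T_succ_fin a k
    have hDk : T a ((k : ℕ) + 1) = D := by omega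
    have hmono : T a ((k : ℕ) + 1) ≤ T a (i : ℕ) := T_mono a (by exact_mod_cast hik)
    omega

end Stmt18Aux

open MvPolynomial

theorem stmt18 (F : Type) [Field F] (n D : ℕ) (S : Set (Fin n →₀ ℕ))
    -- `S` is a set of monomials of degree `D` ...
    (hSdeg : ∀ m ∈ S, (m.sum fun _ e => e) = D)
    -- ... which is a lex segment within degree `D`
    (hSseg : ∀ m m' : Fin n →₀ ℕ, (m.sum fun _ e => e) = D → toLex m' ≤ toLex m →
      m' ∈ S → m ∈ S) :
    -- then for every `d ≥ D`, the degree-`d` monomials of the ideal generated by `S`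
    -- form a lex segment
    ∀ d : ℕ, D ≤ d → ∀ m m' : Fin n →₀ ℕ,
      (m.sum fun _ e => e) = d → (m'.sum fun _ e => e) = d → toLex m' ≤ toLex m →
      MvPolynomial.monomial m' (1 : F) ∈
        Ideal.span ((fun a => MvPolynomial.monomial a (1 : F)) '' S) →
      MvPolynomial.monomial m (1 : F) ∈
        Ideal.span ((fun a => MvPolynomial.monomial a (1 : F)) '' S) := by
  classical
  intro d hDd m m' hm hm' hlex hmem
  have sum_eq : ∀ f : Fin n →₀ ℕ, (f.sum fun _ e => e) = ∑ j, f j := fun f =>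
    Finsupp.sum_fintype f _ (fun _ => rfl)
  rw [mem_ideal_span_monomial_image] at hmem ⊢
  obtain ⟨a, haS, ham'⟩ := hmem m' (by rw [support_monomial, if_neg one_ne_zero]; simp)
  intro xi hxi
  rw [support_monomial, if_neg one_ne_zero, Finset.mem_singleton] at hxi
  rw [hxi]
  clear hxi
  -- the greedy submonomial as a Finsupp
  set B : Fin n →₀ ℕ := Finsupp.equivFunOnFinite.symm (Stmt18Aux.grd D ⇑m) with hB
  have hBapp : ∀ i, B i = Stmt18Aux.grd D ⇑m i := fun i => rfl
  have hdm : ∑ j, m j = d := by rw [← sum_eq]; exact hm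
  have hdm' : ∑ j, m' j = d := by rw [← sum_eq]; exact hm'
  have hda : ∑ j, a j = D := by rw [← sum_eq]; exact hSdeg a haS
  have hsumB : (B.sum fun _ e => e) = D := by
    rw [sum_eq]
    simp only [hBapp]
    exact Stmt18Aux.sum_grd D ⇑m (by omega)
  have haB : toLex a ≤ toLex B := by
    by_contra hc
    push_neg at hc
    rw [Finsupp.Lex.lt_iff] at hc
    obtain ⟨i, h1, h2⟩ := hc
    refine Stmt18Aux.key D ⇑m ⇑m' ⇑a (fun i => Finsupp.le_def.mp ham' i) hda (by omega) (by omega) ?_ ⟨i, ?_, ?_⟩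
    · rcases eq_or_lt_of_le hlex with he | hl
      · left
        have : m' = m := toLex.injective he
        rw [this]
      · right
        rw [Finsupp.Lex.lt_iff] at hl
        obtain ⟨k, hk1, hk2⟩ := hl
        exact ⟨k, fun j hj => hk1 j hj, hk2⟩
    · intro j hj; exact (h1 j hj).symm ▸ (hBapp j).symm ▸ rfl
    · exact hBapp i ▸ h2
  refine ⟨B, hSseg B a hsumB haB haS, Finsupp.le_def.mpr fun i => ?_⟩
  exact (hBapp i) ▸ Stmt18Aux.grd_le D ⇑m i
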